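/- The number of lattice paths of length 2n with steps (1,1) and (1,−1), starting at the origin and never passing below the x-axis (with arbitrary final height), equals the central binomial coefficient C(2n, n). -/

import Mathlib

open Finset

namespace BallotAux
open scoped Classical

/-- number of up-steps among the first `k` steps -/
def up (m : ℕ) (p : Fin m → Bool) (k : ℕ) : ℕ :=
  ∑ i : Fin m, if (i : ℕ) < k ∧ p i then 1 else 0

/-- nonnegativity of all partial sums, in ℕ form -/
def nn (m : ℕ) (p : Fin m → Bool) : Prop := ∀ k ≤ m, k ≤ 2 * up m p k

noncomputable def D (m u : ℕ) : Finset (Fin m → Bool) :=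
  univ.filter (fun p => nn m p ∧ up m p m = u)

lemma up_le (m : ℕ) (p : Fin m → Bool) (k : ℕ) : up m p k ≤ m := by
  calc up m p k ≤ ∑ _i : Fin m, 1 :=
        Finset.sum_le_sum (fun i _ => by split <;> omega)
    _ = m := by simp

lemma sum_eq (m : ℕ) (p : Fin m → Bool) (k : ℕ) (hk : k ≤ m) :
    ∑ i ∈ Finset.univ.filter (fun i : Fin m => (i : ℕ) < k),
      (if p i then (1 : ℤ) else -1) = 2 * (up m p k : ℤ) - k := by
  rw [Finset.sum_filter]
  have : ∀ i : Fin m,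
      (if (i : ℕ) < k then (if p i then (1:ℤ) else -1) else 0)
      = 2 * (if (i : ℕ) < k ∧ p i then (1:ℤ) else 0)
        - (if (i:ℕ) < k then 1 else 0) := by
    intro i; by_cases h1 : (i:ℕ) < k <;> by_cases h2 : p i <;> simp [h1, h2]
  rw [Finset.sum_congr rfl fun i _ => this i, Finset.sum_sub_distrib,
    ← Finset.mul_sum]
  have h1 : ∑ i : Fin m, (if (i : ℕ) < k ∧ p i then (1:ℤ) else 0)
      = (up m p k : ℤ) := by
    simp [up, Nat.cast_sum, apply_ite (Nat.cast : ℕ → ℤ)]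
  have h2 : ∑ i : Fin m, (if (i : ℕ) < k then (1:ℤ) else 0) = k := by
    rw [Fin.sum_univ_eq_sum_range (fun i => if i < k then (1:ℤ) else 0),
      ← Finset.sum_filter]
    have : (range m).filter (fun i => i < k) = range k := by ext i; simp; omega
    simp [this]
  rw [h1, h2]

lemma nonneg_iff (m : ℕ) (p : Fin m → Bool) :
    (∀ k : ℕ, k ≤ m →
      0 ≤ ∑ i ∈ Finset.univ.filter (fun i : Fin m => (i : ℕ) < k),
        (if p i then (1 : ℤ) else -1)) ↔ nn m p := by
  unfold nn
  refine forall₂_congr fun k hk => ?_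
  rw [sum_eq m p k hk]
  constructor
  · intro h; exact_mod_cast (by linarith : (k:ℤ) ≤ 2 * (up m p k : ℤ))
  · intro h; have : (k:ℤ) ≤ 2 * (up m p k : ℤ) := by exact_mod_cast h
    linarith

lemma up_snoc_le (m : ℕ) (q : Fin m → Bool) (b : Bool) (k : ℕ) (hk : k ≤ m) :
    up (m + 1) (Fin.snoc q b) k = up m q k := by
  unfold up
  rw [Fin.sum_univ_castSucc]
  have hlast : ¬ ((Fin.last m : ℕ) < k) := by simp [Fin.last]; omega
  simp only [Fin.snoc_castSucc, Fin.coe_castSucc, hlast, false_and, if_false, add_zero]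

lemma up_snoc_top (m : ℕ) (q : Fin m → Bool) (b : Bool) :
    up (m + 1) (Fin.snoc q b) (m + 1) = up m q m + (if b then 1 else 0) := by
  unfold up
  rw [Fin.sum_univ_castSucc]
  have hlast : ((Fin.last m : ℕ) < m + 1) := by simp [Fin.last]
  simp only [Fin.snoc_castSucc, Fin.coe_castSucc, Fin.snoc_last, hlast, true_and]
  congr 1
  refine Finset.sum_congr rfl fun i _ => ?_
  have h1 : ((i:ℕ) < m + 1) := by omega
  have h2 : ((i:ℕ) < m) := i.isLt
  simp [h1, h2]

lemma snoc_mem_D (m u : ℕ) (q : Fin m → Bool) (b : Bool) :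
    Fin.snoc q b ∈ D (m + 1) u ↔
      nn m q ∧ up m q m + (if b then 1 else 0) = u ∧ m + 1 ≤ 2 * u := by
  simp only [D, Finset.mem_filter, Finset.mem_univ, true_and]
  constructor
  · rintro ⟨h1, h2⟩
    have htop := up_snoc_top m q b
    refine ⟨fun k hk => ?_, by omega, ?_⟩
    · have := h1 k (by omega)
      rwa [up_snoc_le m q b k hk] at this
    · have := h1 (m + 1) le_rfl
      omega
  · rintro ⟨h1, h2, h3⟩
    have htop := up_snoc_top m q b
    refine ⟨fun k hk => ?_, by omega⟩
    rcases Nat.lt_or_ge k (m + 1) with hk' | hk'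
    · rw [up_snoc_le m q b k (by omega)]
      exact h1 k (by omega)
    · have hk2 : k = m + 1 := by omega
      subst hk2; omega

lemma card_D_succ (m u : ℕ) :
    (D (m + 1) u).card =
      (if u = 0 then 0 else (D m (u - 1)).card)
      + (if m + 1 ≤ 2 * u then (D m u).card else 0) := by
  classical
  have hsplit := Finset.card_filter_add_card_filter_not
    (s := D (m + 1) u) (p := fun p => p (Fin.last m) = true)
  rw [← hsplit]
  have key : ∀ (p : Fin (m+1) → Bool), p ∈ D (m+1) u ↔
      nn m (Fin.init p) ∧ up m (Fin.init p) m + (if p (Fin.last m) then 1 else 0) = u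
        ∧ m + 1 ≤ 2 * u := by
    intro p
    conv_lhs => rw [← Fin.snoc_init_self p]
    exact snoc_mem_D m u (Fin.init p) (p (Fin.last m))
  clear hsplit
  congr 1
  · -- last step is up
    rcases Nat.eq_zero_or_pos u with hu | hu
    · subst hu
      rw [if_pos rfl, Finset.card_eq_zero]
      rw [Finset.eq_empty_iff_forall_notMem]
      intro p hp
      rw [Finset.mem_filter, key p] at hp
      obtain ⟨⟨-, h2, -⟩, h4⟩ := hp
      rw [if_pos h4] at h2
      omega
    · obtain ⟨v, rfl⟩ : ∃ v, u = v + 1 := ⟨u - 1, by omega⟩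
      rw [if_neg (by omega)]
      simp only [Nat.add_sub_cancel]
      refine Finset.card_bij' (fun p _ => Fin.init p)
        (fun q _ => Fin.snoc q true) ?_ ?_ ?_ ?_
      · intro p hp
        rw [Finset.mem_filter, key p] at hp
        obtain ⟨⟨h1, h2, h3⟩, h4⟩ := hp
        rw [if_pos h4] at h2
        simp only [D, Finset.mem_filter, Finset.mem_univ, true_and]
        exact ⟨h1, by omega⟩
      · intro q hq
        simp only [D, Finset.mem_filter, Finset.mem_univ, true_and] at hq
        obtain ⟨h1, h2⟩ := hq
        have hm : m ≤ 2 * up m q m := h1 m le_rfl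
        rw [Finset.mem_filter]
        refine ⟨(snoc_mem_D m (v+1) q true).2 ⟨h1, by simp [h2], by omega⟩, ?_⟩
        simp
      · intro p hp
        rw [Finset.mem_filter] at hp
        have h := Fin.snoc_init_self p
        rw [hp.2] at h
        exact h
      · intro q hq
        simp
  · -- last step is down
    by_cases hc : m + 1 ≤ 2 * u
    · rw [if_pos hc]
      refine Finset.card_bij' (fun p _ => Fin.init p)
        (fun q _ => Fin.snoc q false) ?_ ?_ ?_ ?_
      · intro p hp
        rw [Finset.mem_filter, key p] at hp
        obtain ⟨⟨h1, h2, h3⟩, h4⟩ := hp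
        have h4' : p (Fin.last m) = false := by
          cases hpl : p (Fin.last m); rfl; exact absurd hpl h4
        rw [h4'] at h2
        simp only [Bool.false_eq_true, if_false, add_zero] at h2
        simp only [D, Finset.mem_filter, Finset.mem_univ, true_and]
        exact ⟨h1, h2⟩
      · intro q hq
        simp only [D, Finset.mem_filter, Finset.mem_univ, true_and] at hq
        obtain ⟨h1, h2⟩ := hq
        rw [Finset.mem_filter]
        refine ⟨(snoc_mem_D m u q false).2 ⟨h1, by simp [h2], hc⟩, ?_⟩
        simp
      · intro p hp
        rw [Finset.mem_filter] at hp
        have h4' : p (Fin.last m) = false := by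
          cases hpl : p (Fin.last m); rfl; exact absurd hpl hp.2
        have h := Fin.snoc_init_self p
        rw [h4'] at h
        exact h
      · intro q hq
        simp
    · rw [if_neg hc, Finset.card_eq_zero, Finset.eq_empty_iff_forall_notMem]
      intro p hp
      rw [Finset.mem_filter, key p] at hp
      exact hc hp.1.2.2

lemma D_card (m : ℕ) : ∀ u : ℕ, ((D m u).card : ℤ) =
    if m ≤ 2 * u then (Nat.choose m u : ℤ) - Nat.choose m (u + 1) else 0 := by
  induction m with
  | zero =>
    intro u
    have hD : D 0 u = if u = 0 then (univ : Finset (Fin 0 → Bool)) else ∅ := by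
      unfold D
      rcases Nat.eq_zero_or_pos u with hu | hu
      · subst hu
        rw [if_pos rfl, Finset.filter_true_of_mem]
        intro p _
        refine ⟨fun k hk => by omega, ?_⟩
        simp [up]
      · rw [if_neg (by omega), Finset.eq_empty_iff_forall_notMem]
        intro p hp
        rw [Finset.mem_filter] at hp
        have : up 0 p 0 = 0 := by simp [up]
        omega
    rcases Nat.eq_zero_or_pos u with hu | hu
    · subst hu; simp [hD]
    · rw [hD, if_neg (by omega), if_pos (by omega)]
      rw [Nat.choose_eq_zero_of_lt (by omega), Nat.choose_eq_zero_of_lt (by omega)]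
      simp
  | succ m ih =>
    intro u
    rw [card_D_succ m u]
    rcases Nat.eq_zero_or_pos u with hu | hu
    · subst hu
      simp
    · obtain ⟨v, rfl⟩ : ∃ v, u = v + 1 := ⟨u - 1, by omega⟩
      rw [if_neg (by omega)]
      simp only [Nat.add_sub_cancel]
      push_cast
      rw [ih v, ih (v + 1)]
      by_cases h1 : m + 1 ≤ 2 * (v + 1)
      · rw [if_pos (by omega : m + 1 ≤ 2 * (v + 1)), if_pos h1]
        by_cases h2 : m ≤ 2 * v
        · rw [if_pos h2, if_pos (by omega)]
          rw [Nat.choose_succ_succ m (v + 1), Nat.choose_succ_succ m v]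
          push_cast
          ring
        · -- here m = 2 * v + 1
          obtain rfl : m = 2 * v + 1 := by omega
          rw [if_neg h2, if_pos (by omega)]
          rw [Nat.choose_succ_succ (2*v+1) (v + 1), Nat.choose_succ_succ (2*v+1) v]
          have hsym : (2*v+1).choose (v+1) = (2*v+1).choose v := Nat.choose_symm_half v
          rw [hsym]
          push_cast
          ring
      · rw [if_neg h1, if_neg (by omega), if_neg (by omega)]
        simp

lemma total_card (m : ℕ) :
    ((univ.filter (fun p : Fin m → Bool => nn m p)).card : ℤ)
      = ∑ u ∈ range (m + 1), ((D m u).card : ℤ) := by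
  have hmem : ∀ p ∈ univ.filter (fun p : Fin m → Bool => nn m p),
      up m p m ∈ range (m + 1) := by
    intro p _
    rw [Finset.mem_range]
    exact Nat.lt_succ_of_le (up_le m p m)
  rw [Finset.card_eq_sum_card_fiberwise hmem]
  push_cast
  refine Finset.sum_congr rfl fun u _ => ?_
  congr 1
  rw [Finset.filter_filter]
  rfl

lemma final (n : ℕ) :
    ((univ.filter (fun p : Fin (2 * n) → Bool => nn (2 * n) p)).card : ℤ)
      = Nat.choose (2 * n) n := by
  rw [total_card (2 * n)]
  rw [Finset.sum_congr rfl fun u _ => D_card (2 * n) u]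
  rw [← Finset.sum_filter]
  have hf : (range (2 * n + 1)).filter (fun u => 2 * n ≤ 2 * u) = Ico n (2 * n + 1) := by
    ext u; simp; omega
  rw [hf, Finset.sum_Ico_eq_sum_range]
  have h2 : 2 * n + 1 - n = n + 1 := by omega
  rw [h2]
  have := Finset.sum_range_sub' (fun k => ((2 * n).choose (n + k) : ℤ)) (n + 1)
  simp only [← Nat.add_assoc] at this
  rw [this]
  have hz : (2 * n).choose (n + n + 1) = 0 := Nat.choose_eq_zero_of_lt (by omega)
  simp [hz]

end BallotAux

/-- The number of lattice paths of `2n` steps `(1,1)` and `(1,−1)`, starting at the origin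
and never passing below the x-axis (arbitrary final height), equals `C(2n, n)`.
A path is encoded as `p : Fin (2n) → Bool` (`true` = up-step); the nonnegativity condition
says every partial sum of the `±1` increments is `≥ 0`. -/
theorem ballot_paths_card (n : ℕ) :
    Nat.card {p : Fin (2 * n) → Bool //
        ∀ k : ℕ, k ≤ 2 * n →
          0 ≤ ∑ i ∈ Finset.univ.filter (fun i : Fin (2 * n) => (i : ℕ) < k),
                (if p i then (1 : ℤ) else -1)}
      = Nat.choose (2 * n) n := by
  classical
  have h1 : Nat.card {p : Fin (2 * n) → Bool //
        ∀ k : ℕ, k ≤ 2 * n →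
          0 ≤ ∑ i ∈ Finset.univ.filter (fun i : Fin (2 * n) => (i : ℕ) < k),
                (if p i then (1 : ℤ) else -1)}
      = (univ.filter (fun p : Fin (2 * n) → Bool => BallotAux.nn (2 * n) p)).card := by
    rw [Nat.card_eq_fintype_card, Fintype.card_subtype]
    apply Finset.card_bij (fun p _ => p) <;> intro p hp
    · rw [Finset.mem_filter] at hp ⊢
      exact ⟨hp.1, (BallotAux.nonneg_iff (2 * n) p).1 hp.2⟩
    · intro q hq h; exact h
    · rw [Finset.mem_filter] at hp
      exact ⟨p, Finset.mem_filter.2 ⟨hp.1, (BallotAux.nonneg_iff (2 * n) p).2 hp.2⟩, rfl⟩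
  rw [h1]
  exact_mod_cast BallotAux.final n
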